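/- Let F(x,λ) = λ³ − 2(3x+28x²)·λ² + 16(−3x² − 12x³ + 4x⁴)·λ + 3072x⁶. Then F(1,λ) = (λ−64)(λ−6)(λ+8), so 64 is a root of F(1,·) of multiplicity one whose value strictly exceeds the modulus of every other root. Moreover, if δ > 0 and λ : (1−δ, 1+δ) → ℝ is twice differentiable with λ(1) = 64 and F(x, λ(x)) = 0 for all x ∈ (1−δ, 1+δ), then e := λ′(1)/64 = 160/87 and v := (−λ′(1)² + 64·λ″(1) + 64·λ′(1))/64² = 269092/1975509 > 0. -/

import Mathlib

open Polynomial Set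

private lemma transportHD {f g : ℝ → ℝ} {d e x : ℝ} (hfg : ∀ y, f y = g y) (hde : d = e)
    (h : HasDerivAt f d x) : HasDerivAt g e x := by
  subst hde
  exact (funext hfg : f = g) ▸ h

private lemma polyHD (c0 a b c d e f : ℝ) (x : ℝ) :
    HasDerivAt (fun y : ℝ => c0 + a*y + b*y^2 + c*y^3 + d*y^4 + e*y^5 + f*y^6)
      (a + 2*b*x + 3*c*x^2 + 4*d*x^3 + 5*e*x^4 + 6*f*x^5) x := by
  have h1 : HasDerivAt (fun y : ℝ => y) 1 x := hasDerivAt_id x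
  have h2 := hasDerivAt_pow 2 x
  have h3 := hasDerivAt_pow 3 x
  have h4 := hasDerivAt_pow 4 x
  have h5 := hasDerivAt_pow 5 x
  have h6 := hasDerivAt_pow 6 x
  have H := ((((((hasDerivAt_const x c0).add (h1.const_mul a)).add (h2.const_mul b)).add
    (h3.const_mul c)).add (h4.const_mul d)).add (h5.const_mul e)).add (h6.const_mul f)
  refine H.congr_deriv ?_
  all_goals (push_cast; ring)

/-- Derivative of x ↦ F x (L x). -/
private lemma gHD (L : ℝ → ℝ) (l' : ℝ) (x : ℝ) (hL : HasDerivAt L l' x) :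
    HasDerivAt (fun y => (L y)^3 - 2*(3*y+28*y^2)*(L y)^2
        + 16*(-3*y^2-12*y^3+4*y^4)*(L y) + 3072*y^6)
      (3*(L x)^2*l' - ((6+112*x)*(L x)^2 + (6*x+56*x^2)*(2*(L x)*l'))
        + ((-96*x-576*x^2+256*x^3)*(L x) + (-48*x^2-192*x^3+64*x^4)*l') + 18432*x^5) x := by
  have hL2 : HasDerivAt (fun y => (L y)^2) (2*(L x)*l') x := by
    have := hL.pow 2
    refine this.congr_deriv ?_
    all_goals (push_cast; ring)
  have hA : HasDerivAt (fun y => (L y)^3) (3*(L x)^2*l') x := by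
    have := hL.pow 3
    refine this.congr_deriv ?_
    all_goals (push_cast; ring)
  have hc1 : HasDerivAt (fun y : ℝ => 2*(3*y+28*y^2)) (6+112*x) x :=
    transportHD (fun y => by ring) (by ring) (polyHD 0 6 56 0 0 0 0 x)
  have hB : HasDerivAt (fun y => 2*(3*y+28*y^2) * (L y)^2)
      ((6+112*x)*(L x)^2 + (6*x+56*x^2)*(2*(L x)*l')) x := by
    have := hc1.mul hL2
    refine this.congr_deriv ?_
    ring
  have hc2 : HasDerivAt (fun y : ℝ => 16*(-3*y^2-12*y^3+4*y^4)) (-96*x-576*x^2+256*x^3) x :=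
    transportHD (fun y => by ring) (by ring) (polyHD 0 0 (-48) (-192) 64 0 0 x)
  have hC : HasDerivAt (fun y => 16*(-3*y^2-12*y^3+4*y^4)*(L y))
      ((-96*x-576*x^2+256*x^3)*(L x) + (-48*x^2-192*x^3+64*x^4)*l') x := by
    have := hc2.mul hL
    refine this.congr_deriv ?_
    ring
  have hD : HasDerivAt (fun y : ℝ => 3072*y^6) (18432*x^5) x :=
    transportHD (fun y => by ring) (by ring) (polyHD 0 0 0 0 0 0 3072 x)
  exact ((hA.sub hB).add hC).add hD

theorem iterated_claw_euler_genus_parameters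
    (F : ℝ → ℝ → ℝ)
    (hF : ∀ x l : ℝ, F x l = l ^ 3 - 2 * (3 * x + 28 * x ^ 2) * l ^ 2 +
      16 * (-3 * x ^ 2 - 12 * x ^ 3 + 4 * x ^ 4) * l + 3072 * x ^ 6)
    (Q : Polynomial ℂ)
    (hQ : Q = X ^ 3 - Polynomial.C 62 * X ^ 2 - Polynomial.C 176 * X + Polynomial.C 3072) :
    (∀ l : ℝ, F 1 l = (l - 64) * (l - 6) * (l + 8)) ∧
    Q.rootMultiplicity 64 = 1 ∧
    (∀ μ : ℂ, Q.eval μ = 0 → μ ≠ 64 → ‖μ‖ < 64) ∧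
    (∀ (δ : ℝ), 0 < δ → ∀ lam : ℝ → ℝ,
      (∀ x ∈ Set.Ioo (1 - δ) (1 + δ), DifferentiableAt ℝ lam x) →
      (∀ x ∈ Set.Ioo (1 - δ) (1 + δ), DifferentiableAt ℝ (deriv lam) x) →
      lam 1 = 64 →
      (∀ x ∈ Set.Ioo (1 - δ) (1 + δ), F x (lam x) = 0) →
      deriv lam 1 / 64 = 160 / 87 ∧
      (-(deriv lam 1) ^ 2 + 64 * deriv (deriv lam) 1 + 64 * deriv lam 1) / 64 ^ 2 =
        269092 / 1975509 ∧
      0 < (269092 : ℝ) / 1975509) := by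
  have hfact : Q = (X - Polynomial.C 64) * ((X - Polynomial.C 6) * (X + Polynomial.C 8)) := by
    rw [hQ]
    simp only [map_ofNat]
    ring
  refine ⟨?_, ?_, ?_, ?_⟩
  · intro l
    rw [hF]
    ring
  · have hQ0 : Q ≠ 0 := by
      intro h
      have : Q.eval 0 = 0 := by rw [h]; simp
      rw [hQ] at this
      simp at this
    rw [hfact] at hQ0 ⊢
    rw [Polynomial.rootMultiplicity_mul hQ0]
    rw [Polynomial.rootMultiplicity_X_sub_C_self]
    have h2 : Polynomial.rootMultiplicity (64 : ℂ)
        ((X - Polynomial.C 6) * (X + Polynomial.C 8)) = 0 := by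
      apply Polynomial.rootMultiplicity_eq_zero
      simp [Polynomial.IsRoot]
      norm_num
    rw [h2]
  · intro μ hμ hne
    rw [hfact] at hμ
    simp only [Polynomial.eval_mul, Polynomial.eval_sub, Polynomial.eval_add,
      Polynomial.eval_X, Polynomial.eval_C, mul_eq_zero, sub_eq_zero, add_eq_zero_iff_eq_neg] at hμ
    rcases hμ with h | h | h
    · exact absurd h hne
    · rw [h]
      norm_num
    · rw [h, show ((-8 : ℂ)) = -(8:ℂ) by norm_num, norm_neg]
      norm_num
  · intro δ hδ lam hd1 hd2 hl1 hzero
    have hmem : (1 : ℝ) ∈ Set.Ioo (1 - δ) (1 + δ) := by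
      constructor <;> linarith
    have hopen : Set.Ioo (1 - δ) (1 + δ) ∈ nhds (1 : ℝ) :=
      (isOpen_Ioo).mem_nhds hmem
    set d1 := deriv lam 1 with hd1def
    set d2 := deriv (deriv lam) 1 with hd2def
    -- G x = 0 on the interval
    set G : ℝ → ℝ := fun x =>
      3*(lam x)^2*(deriv lam x) - ((6+112*x)*(lam x)^2 + (6*x+56*x^2)*(2*(lam x)*(deriv lam x)))
        + ((-96*x-576*x^2+256*x^3)*(lam x) + (-48*x^2-192*x^3+64*x^4)*(deriv lam x)) + 18432*x^5
      with hGdef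
    have hg0 : ∀ x ∈ Set.Ioo (1 - δ) (1 + δ),
        (lam x)^3 - 2*(3*x+28*x^2)*(lam x)^2 + 16*(-3*x^2-12*x^3+4*x^4)*(lam x) + 3072*x^6 = 0 := by
      intro x hx
      have := hzero x hx
      rw [hF] at this
      linarith [this]
    have hG0 : ∀ x ∈ Set.Ioo (1 - δ) (1 + δ), G x = 0 := by
      intro x hx
      have hLx : HasDerivAt lam (deriv lam x) x := (hd1 x hx).hasDerivAt
      have h1 : HasDerivAt (fun y => (lam y)^3 - 2*(3*y+28*y^2)*(lam y)^2
          + 16*(-3*y^2-12*y^3+4*y^4)*(lam y) + 3072*y^6) (G x) x := gHD lam (deriv lam x) x hLx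
      have hnx : Set.Ioo (1 - δ) (1 + δ) ∈ nhds x := (isOpen_Ioo).mem_nhds hx
      have hev : (fun y => (lam y)^3 - 2*(3*y+28*y^2)*(lam y)^2
          + 16*(-3*y^2-12*y^3+4*y^4)*(lam y) + 3072*y^6) =ᶠ[nhds x] (fun _ => (0:ℝ)) :=
        Filter.eventuallyEq_of_mem hnx (fun y hy => hg0 y hy)
      have h2 : HasDerivAt (fun y => (lam y)^3 - 2*(3*y+28*y^2)*(lam y)^2
          + 16*(-3*y^2-12*y^3+4*y^4)*(lam y) + 3072*y^6) 0 x :=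
        (hasDerivAt_const x (0:ℝ)).congr_of_eventuallyEq hev
      exact h1.unique h2
    -- first equation : G 1 = 0
    have heq1 : 4176 * d1 - 491520 = 0 := by
      have := hG0 1 hmem
      rw [hGdef] at this
      simp only at this
      rw [hl1] at this
      rw [hd1def]
      nlinarith [this]
    have hd1val : d1 = 10240 / 87 := by linarith
    -- second equation : deriv G 1 = 0
    have hlam1 : HasDerivAt lam d1 1 := (hd1 1 hmem).hasDerivAt
    have hM1 : HasDerivAt (deriv lam) d2 1 := (hd2 1 hmem).hasDerivAt
    have hGd : HasDerivAt G
        ((2*(lam 1)*d1*(deriv lam 1)*3 + 3*(lam 1)^2*d2)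
          - ((112*(lam 1)^2 + (6+112*1)*(2*(lam 1)*d1))
            + ((6+112*1)*(2*(lam 1)*(deriv lam 1)) + (6*1+56*1^2)*((2*d1)*(deriv lam 1) + 2*(lam 1)*d2)))
          + (((-96-1152*1+768*1^2)*(lam 1) + (-96*1-576*1^2+256*1^3)*d1)
            + ((-96*1-576*1^2+256*1^3)*(deriv lam 1) + (-48*1^2-192*1^3+64*1^4)*d2))
          + 92160*1^4) 1 := by
      have hL2 : HasDerivAt (fun y => (lam y)^2) (2*(lam 1)*d1) 1 := by
        have := hlam1.pow 2
        refine this.congr_deriv ?_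
        all_goals (push_cast; ring)
      have hT1 : HasDerivAt (fun y => 3*(lam y)^2*(deriv lam y))
          (2*(lam 1)*d1*(deriv lam 1)*3 + 3*(lam 1)^2*d2) 1 := by
        have := (hL2.const_mul 3).mul hM1
        refine this.congr_deriv ?_
        ring
      have hc3 : HasDerivAt (fun y : ℝ => 6+112*y) 112 1 :=
        transportHD (fun y => by ring) (by ring) (polyHD 6 112 0 0 0 0 0 1)
      have hT2a : HasDerivAt (fun y => (6+112*y)*(lam y)^2)
          (112*(lam 1)^2 + (6+112*1)*(2*(lam 1)*d1)) 1 := hc3.mul hL2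
      have hc4 : HasDerivAt (fun y : ℝ => 6*y+56*y^2) (6+112*1) 1 :=
        transportHD (fun y => by ring) (by ring) (polyHD 0 6 56 0 0 0 0 1)
      have hinner : HasDerivAt (fun y => 2*(lam y)*(deriv lam y))
          ((2*d1)*(deriv lam 1) + 2*(lam 1)*d2) 1 := (hlam1.const_mul 2).mul hM1
      have hT2b : HasDerivAt (fun y => (6*y+56*y^2)*(2*(lam y)*(deriv lam y)))
          ((6+112*1)*(2*(lam 1)*(deriv lam 1)) + (6*1+56*1^2)*((2*d1)*(deriv lam 1) + 2*(lam 1)*d2)) 1 :=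
        hc4.mul hinner
      have hc5 : HasDerivAt (fun y : ℝ => -96*y-576*y^2+256*y^3) (-96-1152*1+768*1^2) 1 :=
        transportHD (fun y => by ring) (by ring) (polyHD 0 (-96) (-576) 256 0 0 0 1)
      have hT3a : HasDerivAt (fun y => (-96*y-576*y^2+256*y^3)*(lam y))
          ((-96-1152*1+768*1^2)*(lam 1) + (-96*1-576*1^2+256*1^3)*d1) 1 := hc5.mul hlam1
      have hc6 : HasDerivAt (fun y : ℝ => -48*y^2-192*y^3+64*y^4) (-96*1-576*1^2+256*1^3) 1 :=
        transportHD (fun y => by ring) (by ring) (polyHD 0 0 (-48) (-192) 64 0 0 1)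
      have hT3b : HasDerivAt (fun y => (-48*y^2-192*y^3+64*y^4)*(deriv lam y))
          ((-96*1-576*1^2+256*1^3)*(deriv lam 1) + (-48*1^2-192*1^3+64*1^4)*d2) 1 := hc6.mul hM1
      have hT4 : HasDerivAt (fun y : ℝ => 18432*y^5) (92160*1^4) 1 :=
        transportHD (fun y => by ring) (by ring) (polyHD 0 0 0 0 0 18432 0 1)
      exact ((hT1.sub (hT2a.add hT2b)).add (hT3a.add hT3b)).add hT4
    have hGzero : HasDerivAt G 0 1 := by
      have hev : G =ᶠ[nhds 1] (fun _ => (0:ℝ)) :=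
        Filter.eventuallyEq_of_mem hopen (fun y hy => hG0 y hy)
      exact (hasDerivAt_const 1 (0:ℝ)).congr_of_eventuallyEq hev
    have heq2 := hGd.unique hGzero
    rw [hl1, ← hd1def] at heq2
    have hd2val : d2 = 212324608 / 1975509 := by
      rw [hd1val] at heq2
      nlinarith [heq2]
    refine ⟨?_, ?_, by norm_num⟩
    · rw [hd1val]
      norm_num
    · rw [hd1val, hd2val]
      norm_num
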